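/- For all natural numbers a, c, k with a ≤ c−1, the following identity holds in ℚ(q): Σ_{j=0}^{a} q^(−(c+1)j + k(a+1))·qbinom(a,j)·qbinom(c−1−a, k−j) + q^(−c+1+2a)·Σ_{j=0}^{a} q^(−(c+1)j + (k−1)(a+1))·qbinom(a,j)·qbinom(c−1−a, k−1−j) = qbinom(c, k). -/

import Mathlib

open scoped BigOperators

/-- The generator `q` of the field of rational functions `ℚ(q)`. -/
noncomputable def q : RatFunc ℚ := RatFunc.X

lemma q_ne_zero : q ≠ 0 := RatFunc.X_ne_zero
lemma q_pow_ne_one {n : ℕ} (h : n ≠ 0) : q ^ n ≠ 1 := by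
  intro hc
  have : (Polynomial.X : Polynomial ℚ) ^ n = 1 := by
    apply RatFunc.algebraMap_injective
    simpa [map_pow, RatFunc.algebraMap_X, q] using hc
  have := congrArg Polynomial.natDegree this
  simp [Polynomial.natDegree_X_pow] at this
  exact h this

lemma q_zpow_ne_one {a : ℤ} (h : 0 < a) : q ^ a ≠ 1 := by
  intro hc
  have : q ^ a.toNat = 1 := by
    rw [← zpow_natCast, Int.toNat_of_nonneg h.le]; exact hc
  exact q_pow_ne_one (by omega) this

lemma qpow_add (x y : ℤ) : q ^ (x + y) = q ^ x * q ^ y := zpow_add₀ q_ne_zero x y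

lemma denom_ne_zero : q - q⁻¹ ≠ 0 := by
  rw [sub_ne_zero]
  intro hc
  have : q ^ (2:ℤ) = 1 := by
    have := congrArg (· * q) hc
    simp [inv_mul_cancel₀ q_ne_zero] at this
    rw [show (2:ℤ) = 1 + 1 by norm_num, qpow_add]; simpa [zpow_one] using this
  exact q_zpow_ne_one (by norm_num) this

/-- The balanced quantum integer `[a] = (q^a - q^(-a))/(q - q⁻¹)`. -/
noncomputable def qint (a : ℤ) : RatFunc ℚ := (q ^ a - q ^ (-a)) / (q - q⁻¹)

lemma num_ne_zero {a : ℤ} (h : 0 < a) : q ^ a - q ^ (-a) ≠ 0 := by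
  rw [sub_ne_zero]
  intro hc
  have : q ^ (2*a) = 1 := by
    rw [two_mul, qpow_add]; nth_rewrite 2 [hc]; rw [← qpow_add, add_neg_cancel, zpow_zero]
  exact q_zpow_ne_one (by omega) this

lemma qint_ne_zero {a : ℤ} (h : 0 < a) : qint a ≠ 0 :=
  div_ne_zero (num_ne_zero h) denom_ne_zero

lemma qint_zero : qint 0 = 0 := by simp [qint]

/-- The quantum factorial `[k]! = [1][2]⋯[k]`. -/
noncomputable def qfact (k : ℕ) : RatFunc ℚ := ∏ i ∈ Finset.range k, qint ((i : ℤ) + 1)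

lemma qfact_ne_zero (k : ℕ) : qfact k ≠ 0 := by
  apply Finset.prod_ne_zero_iff.mpr
  intro i _
  exact qint_ne_zero (by positivity)

/-- The balanced quantum binomial `qbinom a b = [a][a-1]⋯[a-b+1]/[b]!` for `b ≥ 0`,
and `0` for `b < 0`. -/
noncomputable def qbinom (a b : ℤ) : RatFunc ℚ :=
  if b < 0 then 0
  else (∏ i ∈ Finset.range b.toNat, qint (a - (i : ℤ))) / qfact b.toNat

lemma qbinom_neg (a : ℤ) {b : ℤ} (h : b < 0) : qbinom a b = 0 := by simp [qbinom, h]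

lemma qbinom_nat (a : ℤ) (t : ℕ) :
    qbinom a t = (∏ i ∈ Finset.range t, qint (a - (i : ℤ))) / qfact t := by
  simp [qbinom]

lemma qbinom_zero (a : ℤ) : qbinom a 0 = 1 := by
  simp [qbinom, qfact]

lemma qbinom_big (m : ℕ) {t : ℤ} (h : (m : ℤ) < t) : qbinom m t = 0 := by
  have ht : ¬ t < 0 := by omega
  rw [qbinom, if_neg ht]
  have hm : m ∈ Finset.range t.toNat := Finset.mem_range.mpr (by omega)
  rw [Finset.prod_eq_zero hm (by simp [qint_zero]), zero_div]

lemma qint_split (N s : ℕ) :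
    qint ((N : ℤ) + 1) =
      q ^ (-((s : ℤ) + 1)) * qint ((N : ℤ) - s) + q ^ ((N : ℤ) - s) * qint ((s : ℤ) + 1) := by
  unfold qint
  rw [← mul_div_assoc, ← mul_div_assoc, ← add_div]
  congr 1
  simp only [mul_sub, ← qpow_add]
  ring_nf

lemma pascal (N : ℕ) (t : ℤ) :
    qbinom ((N : ℤ) + 1) t =
      q ^ (-t) * qbinom (N : ℤ) t + q ^ ((N : ℤ) + 1 - t) * qbinom (N : ℤ) (t - 1) := by
  rcases lt_trichotomy t 0 with h | rfl | h
  · rw [qbinom_neg _ h, qbinom_neg _ h, qbinom_neg _ (by omega), mul_zero, mul_zero, add_zero]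
  · rw [qbinom_zero, qbinom_zero, qbinom_neg _ (by norm_num), neg_zero, zpow_zero, one_mul,
      mul_zero, add_zero]
  · obtain ⟨s, rfl⟩ : ∃ s : ℕ, t = (s : ℤ) + 1 := ⟨(t - 1).toNat, by omega⟩
    have e1 : (s : ℤ) + 1 = ((s + 1 : ℕ) : ℤ) := by push_cast; ring
    have e2 : ((s + 1 : ℕ) : ℤ) - 1 = ((s : ℕ) : ℤ) := by push_cast; ring
    rw [e1, e2, qbinom_nat, qbinom_nat, qbinom_nat]
    have hP1 : (∏ i ∈ Finset.range (s + 1), qint ((N : ℤ) + 1 - (i : ℤ))) =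
        (∏ i ∈ Finset.range s, qint ((N : ℤ) - (i : ℤ))) * qint ((N : ℤ) + 1) := by
      rw [Finset.prod_range_succ']
      push_cast
      ring_nf
    have hP2 : (∏ i ∈ Finset.range (s + 1), qint ((N : ℤ) - (i : ℤ))) =
        (∏ i ∈ Finset.range s, qint ((N : ℤ) - (i : ℤ))) * qint ((N : ℤ) - s) := by
      rw [Finset.prod_range_succ]
    have hF1 : qfact (s + 1) = qfact s * qint ((s : ℤ) + 1) := by
      rw [qfact, Finset.prod_range_succ]; rfl
    rw [hP1, hP2, hF1, qint_split N s]
    have hF : qfact s ≠ 0 := qfact_ne_zero s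
    have hu : qint ((s : ℤ) + 1) ≠ 0 := qint_ne_zero (by positivity)
    field_simp
    push_cast
    ring_nf

lemma shuffle (x y z w : ℤ) (h : x + y = z + w) (U V : RatFunc ℚ) :
    q ^ x * U * (q ^ y * V) = q ^ z * (q ^ w * U * V) := by
  rw [show q ^ x * U * (q ^ y * V) = q ^ (x + y) * (U * V) by rw [qpow_add]; ring, h,
    qpow_add]
  ring

lemma vandermonde (m n : ℕ) (k : ℤ) :
    ∑ j ∈ Finset.range (m + 1),
        q ^ (-((m : ℤ) + (n : ℤ)) * (j : ℤ) + k * (m : ℤ)) * qbinom (m : ℤ) (j : ℤ) *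
          qbinom (n : ℤ) (k - (j : ℤ)) =
      qbinom ((m : ℤ) + (n : ℤ)) k := by
  induction n generalizing k with
  | zero =>
    simp only [Nat.cast_zero, add_zero]
    rcases lt_or_ge k 0 with hk | hk
    · rw [qbinom_neg _ hk]
      apply Finset.sum_eq_zero
      intro j _
      rw [qbinom_neg _ (show k - (j : ℤ) < 0 by omega), mul_zero]
    · rcases le_or_gt k (m : ℤ) with hkm | hkm
      · have hmem : k.toNat ∈ Finset.range (m + 1) := Finset.mem_range.mpr (by omega)
        rw [Finset.sum_eq_single_of_mem k.toNat hmem]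
        · have hkt : ((k.toNat : ℕ) : ℤ) = k := Int.toNat_of_nonneg hk
          rw [hkt, sub_self, qbinom_zero, mul_one, show -(m : ℤ) * k + k * m = 0 by ring,
            zpow_zero, one_mul]
        · intro j _ hj
          have hjk : (j : ℤ) ≠ k := by omega
          rcases lt_or_gt_of_ne hjk with h1 | h1
          · rw [show (0 : ℤ) = ((0 : ℕ) : ℤ) by norm_num] at *
            rw [qbinom_big 0 (by omega), mul_zero]
          · rw [qbinom_neg _ (show k - (j : ℤ) < 0 by omega), mul_zero]
      · rw [qbinom_big m hkm]
        apply Finset.sum_eq_zero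
        intro j hj
        have : (j : ℤ) < k := by
          have := Finset.mem_range.mp hj; omega
        rw [show (0 : ℤ) = ((0 : ℕ) : ℤ) by norm_num] at *
        rw [qbinom_big 0 (by omega), mul_zero]
  | succ n IH =>
    have key : ∀ j ∈ Finset.range (m + 1),
        q ^ (-((m : ℤ) + ((n + 1 : ℕ) : ℤ)) * (j : ℤ) + k * (m : ℤ)) * qbinom (m : ℤ) (j : ℤ) *
            qbinom ((n + 1 : ℕ) : ℤ) (k - (j : ℤ)) =
          q ^ (-k) * (q ^ (-((m : ℤ) + (n : ℤ)) * (j : ℤ) + k * (m : ℤ)) *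
              qbinom (m : ℤ) (j : ℤ) * qbinom (n : ℤ) (k - (j : ℤ))) +
            q ^ ((m : ℤ) + (n : ℤ) + 1 - k) * (q ^ (-((m : ℤ) + (n : ℤ)) * (j : ℤ) +
              (k - 1) * (m : ℤ)) * qbinom (m : ℤ) (j : ℤ) * qbinom (n : ℤ) (k - 1 - (j : ℤ))) := by
      intro j _
      have hc : ((n + 1 : ℕ) : ℤ) = (n : ℤ) + 1 := by push_cast; ring
      rw [hc, pascal n (k - (j : ℤ)), mul_add,
        show k - (j : ℤ) - 1 = k - 1 - (j : ℤ) by ring]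
      congr 1
      · exact shuffle _ _ _ _ (by ring) _ _
      · exact shuffle _ _ _ _ (by ring) _ _
    rw [Finset.sum_congr rfl key, Finset.sum_add_distrib, ← Finset.mul_sum, ← Finset.mul_sum,
      IH k, IH (k - 1), show (m : ℤ) + ((n + 1 : ℕ) : ℤ) = ((m : ℤ) + (n : ℤ)) + 1 by push_cast; ring]
    have := pascal (m + n) k
    push_cast at this
    rw [this]

lemma shuffle2 (x z w : ℤ) (h : x = z + w) (U V : RatFunc ℚ) :
    q ^ x * U * V = q ^ z * (q ^ w * U * V) := by
  rw [h, qpow_add]; ring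

lemma shuffle3 (x y z : ℤ) (h : x + y = z) (U V : RatFunc ℚ) :
    q ^ x * (q ^ y * U) * V = q ^ z * U * V := by
  rw [← h, qpow_add]; ring

/-- The q-binomial identity (A.3) of the paper: for naturals `a, c, k` with `a ≤ c − 1`,
`Σ_{j=0}^{a} q^(−(c+1)j+k(a+1))·qbinom(a,j)·qbinom(c−1−a,k−j)
 + q^(−c+1+2a)·Σ_{j=0}^{a} q^(−(c+1)j+(k−1)(a+1))·qbinom(a,j)·qbinom(c−1−a,k−1−j)
 = qbinom(c,k)`. -/
theorem qbinom_sum_identity (a c k : ℕ) (hac : a + 1 ≤ c) :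
    (∑ j ∈ Finset.range (a + 1),
        q ^ (-((c : ℤ) + 1) * (j : ℤ) + (k : ℤ) * ((a : ℤ) + 1)) *
          qbinom (a : ℤ) (j : ℤ) * qbinom ((c : ℤ) - 1 - (a : ℤ)) ((k : ℤ) - (j : ℤ))) +
      q ^ (-(c : ℤ) + 1 + 2 * (a : ℤ)) *
        ∑ j ∈ Finset.range (a + 1),
          q ^ (-((c : ℤ) + 1) * (j : ℤ) + ((k : ℤ) - 1) * ((a : ℤ) + 1)) *
            qbinom (a : ℤ) (j : ℤ) * qbinom ((c : ℤ) - 1 - (a : ℤ)) ((k : ℤ) - 1 - (j : ℤ)) =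
    qbinom (c : ℤ) (k : ℤ) := by
  obtain ⟨n, hcast, hsum⟩ : ∃ n : ℕ, (c : ℤ) - 1 - (a : ℤ) = (n : ℤ) ∧ a + 1 + n = c :=
    ⟨c - 1 - a, by omega, by omega⟩
  rw [hcast]
  have hV := vandermonde (a + 1) n (k : ℤ)
  rw [show ((a + 1 : ℕ) : ℤ) + (n : ℤ) = (c : ℤ) by omega] at hV
  rw [← hV]
  have key1 : ∀ j ∈ Finset.range (a + 1 + 1),
      q ^ (-(c : ℤ) * (j : ℤ) + (k : ℤ) * ((a + 1 : ℕ) : ℤ)) *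
          qbinom ((a + 1 : ℕ) : ℤ) (j : ℤ) * qbinom (n : ℤ) ((k : ℤ) - (j : ℤ)) =
        (q ^ (-((c : ℤ) + 1) * (j : ℤ) + (k : ℤ) * ((a : ℤ) + 1)) *
            qbinom (a : ℤ) (j : ℤ) * qbinom (n : ℤ) ((k : ℤ) - (j : ℤ))) +
          (q ^ (-((c : ℤ) + 1) * (j : ℤ) + (k : ℤ) * ((a : ℤ) + 1) + ((a : ℤ) + 1)) *
            qbinom (a : ℤ) ((j : ℤ) - 1) * qbinom (n : ℤ) ((k : ℤ) - (j : ℤ))) := by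
    intro j _
    have hnc : (n : ℤ) = (c : ℤ) - 1 - (a : ℤ) := by omega
    rw [show ((a + 1 : ℕ) : ℤ) = (a : ℤ) + 1 by push_cast; ring, pascal a (j : ℤ),
      mul_add, add_mul]
    congr 1
    · exact shuffle3 _ _ _ (by ring) _ _
    · exact shuffle3 _ _ _ (by ring) _ _
  rw [Finset.sum_congr rfl key1, Finset.sum_add_distrib]
  congr 1
  · conv_rhs => rw [Finset.sum_range_succ]
    rw [qbinom_big a (show (a : ℤ) < ((a + 1 : ℕ) : ℤ) by push_cast; omega), mul_zero, zero_mul,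
      add_zero]
  · conv_rhs => rw [Finset.sum_range_succ']
    rw [qbinom_neg (a : ℤ) (show ((0 : ℕ) : ℤ) - 1 < 0 by norm_num), mul_zero, zero_mul,
      add_zero, Finset.mul_sum]
    apply Finset.sum_congr rfl
    intro j _
    rw [show ((j + 1 : ℕ) : ℤ) - 1 = (j : ℤ) by push_cast; ring,
      show (k : ℤ) - ((j + 1 : ℕ) : ℤ) = (k : ℤ) - 1 - (j : ℤ) by push_cast; ring]
    exact (shuffle2 _ _ _ (by push_cast; ring) _ _).symm
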